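/- Let G be a finite group and K a minimal normal subgroup of G which is a direct product K = S₁ × ⋯ × S_t of G-conjugates of a nonabelian simple group S = S₁. Let p be a prime dividing |S| and let P be a Sylow p-subgroup of K. If G = K·C_G(P), then t = 1, i.e. K = S is simple. -/

import Mathlib

private lemma mem_conj_map_iff' {G : Type*} [Group G] (H : Subgroup G) (g y : G) :
    y ∈ H.map (MulAut.conj g).toMonoidHom ↔ g⁻¹ * y * g ∈ H := by
  rw [Subgroup.mem_map_equiv]
  simp [MulAut.conj]


/-- If `K` is a minimal normal subgroup of the finite group `G` which is the internal direct
product of subgroups `S 0, …, S (t-1)`, pairwise-distinct `G`-conjugates of the nonabelian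
simple group `S 0`, `p` divides `|S 0|`, `P` is a Sylow `p`-subgroup of `K`, and
`G = K·C_G(P)`, then `t = 1`. -/
theorem minimal_normal_simple_of_factorization
    (G : Type*) [Group G] [Finite G] (p : ℕ) (hp : p.Prime)
    (K : Subgroup G) [K.Normal] (hKbot : K ≠ ⊥)
    (hmin : ∀ N : Subgroup G, N.Normal → N ≤ K → N = ⊥ ∨ N = K)
    (t : ℕ) (ht : 0 < t) (S : Fin t → Subgroup G)
    (hsimple : IsSimpleGroup (S ⟨0, ht⟩))
    (hnonab : ¬ ∀ x y : (S ⟨0, ht⟩), x * y = y * x)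
    (hconj : ∀ i : Fin t, ∃ g : G, S i = (S ⟨0, ht⟩).map (MulAut.conj g).toMonoidHom)
    (hdistinct : Function.Injective S)
    (hsup : (⨆ i, S i) = K)
    (hindep : iSupIndep S)
    (hcomm : ∀ i j : Fin t, i ≠ j → ∀ x ∈ S i, ∀ y ∈ S j, Commute x y)
    (hpS : p ∣ Nat.card (S ⟨0, ht⟩))
    (P : Sylow p K)
    (hfac : K ⊔ Subgroup.centralizer (((P : Subgroup K).map K.subtype : Subgroup G) : Set G) = ⊤) :
    t = 1 := by
  classical
  have hfp : Fact p.Prime := ⟨hp⟩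
  set i0 : Fin t := ⟨0, ht⟩ with hi0
  set S0 : Subgroup G := S i0 with hS0def
  set Pg : Subgroup G := (P : Subgroup K).map K.subtype with hPgdef
  have hSiK : ∀ i, S i ≤ K := fun i => hsup ▸ le_iSup S i
  have hS0K : S0 ≤ K := hSiK i0
  -- K normalizes S0
  have hKn : K ≤ Subgroup.normalizer (S0 : Set G) := by
    rw [← hsup]
    apply iSup_le
    intro i
    by_cases h : i = i0
    · subst h; exact Subgroup.le_normalizer
    · intro x hx
      rw [Subgroup.mem_normalizer_iff]
      intro y
      constructor
      · intro hy
        have hc := (hcomm i i0 h x hx y hy).eq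
        have : x * y * x⁻¹ = y := by rw [hc]; group
        rwa [this]
      · intro hy
        have hc := (hcomm i i0 h x hx _ hy).eq
        have h1 : y = x⁻¹ * (x * y * x⁻¹) * x := by group
        have h2 : x⁻¹ * (x * y * x⁻¹) * x = x * y * x⁻¹ := by
          calc x⁻¹ * (x * y * x⁻¹) * x = x⁻¹ * ((x * y * x⁻¹) * x) := by group
            _ = x⁻¹ * (x * (x * y * x⁻¹)) := by rw [← hc]
            _ = x * y * x⁻¹ := by group
        rw [h1, h2]; exact hy
  -- K normalizes every conjugate of S0
  have hKnT : ∀ g : G, K ≤ Subgroup.normalizer ((S0.map (MulAut.conj g).toMonoidHom : Subgroup G) : Set G) := by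
    intro g k hk
    rw [Subgroup.mem_normalizer_iff]
    intro y
    rw [mem_conj_map_iff', mem_conj_map_iff']
    have hk' : g⁻¹ * k * g ∈ K := Subgroup.Normal.conj_mem' ‹K.Normal› k hk g
    have := Subgroup.mem_normalizer_iff.mp (hKn hk') (g⁻¹ * y * g)
    convert this using 2
    group
  -- a nontrivial p-element in Pg ⊓ S0
  obtain ⟨a0, ha0⟩ := exists_prime_orderOf_dvd_card' (G := S0) p hpS
  set a : G := (a0 : G) with hadef
  have haS0 : a ∈ S0 := a0.2
  have haK : a ∈ K := hS0K haS0
  have haord : orderOf a = p := by rw [hadef, Subgroup.orderOf_coe, ha0]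
  set aK : K := ⟨a, haK⟩ with haKdef
  have haKord : orderOf aK = p := by rw [haKdef, Subgroup.orderOf_mk, haord]
  have hpgrp : IsPGroup p (Subgroup.zpowers aK) := by
    apply IsPGroup.of_card (n := 1)
    rw [Nat.card_zpowers, haKord, pow_one]
  obtain ⟨P₂, hP₂⟩ := hpgrp.exists_le_sylow
  obtain ⟨k, hk⟩ := MulAction.exists_smul_eq K P₂ P
  have haP₂ : aK ∈ (P₂ : Subgroup K) := hP₂ (Subgroup.mem_zpowers aK)
  have hbP : k * aK * k⁻¹ ∈ (P : Subgroup K) := by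
    rw [← hk]
    exact ⟨aK, haP₂, rfl⟩
  set b : G := ((k : G) * a * (k : G)⁻¹) with hbdef
  have hbPg : b ∈ Pg := ⟨k * aK * k⁻¹, hbP, rfl⟩
  have hbS0 : b ∈ S0 :=
    (Subgroup.mem_normalizer_iff.mp (hKn k.2) a).mp haS0
  have hbne : b ≠ 1 := by
    intro hb1
    have : a = 1 := by
      have : (k : G) * a * (k : G)⁻¹ = 1 := hb1
      calc a = (k:G)⁻¹ * ((k:G) * a * (k:G)⁻¹) * (k:G) := by group
        _ = (k:G)⁻¹ * 1 * (k:G) := by rw [this]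
        _ = 1 := by group
    rw [this, orderOf_one] at haord
    exact hp.one_lt.ne' haord.symm
  -- the centralizer normalizes S0
  have hC : Subgroup.centralizer (Pg : Set G) ≤ Subgroup.normalizer (S0 : Set G) := by
    intro x hx
    set T : Subgroup G := S0.map (MulAut.conj x).toMonoidHom with hTdef
    have hinj : Function.Injective (MulAut.conj x).toMonoidHom :=
      (MulAut.conj x).injective
    have e : S0 ≃* T := Subgroup.equivMapOfInjective S0 _ hinj
    have hTnt : Nontrivial T := e.symm.toEquiv.nontrivial
    have hTsimple : IsSimpleGroup T :=
      IsSimpleGroup.isSimpleGroup_of_surjective e.toMonoidHom e.surjective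
    have hTK : T ≤ K := by
      rintro y ⟨s, hs, rfl⟩
      exact Subgroup.Normal.conj_mem ‹K.Normal› s (hS0K hs) x
    have hbT : b ∈ T := by
      rw [mem_conj_map_iff']
      have hcomm' := Subgroup.mem_centralizer_iff.mp hx b hbPg
      have : x⁻¹ * b * x = b := by
        calc x⁻¹ * b * x = x⁻¹ * (b * x) := by group
          _ = x⁻¹ * (x * b) := by rw [hcomm']
          _ = b := by group
      rwa [this]
    -- the subgroup T ⊓ S0 of T is normal
    have hR : ((T ⊓ S0).subgroupOf T).Normal := by
      constructor
      intro n hn g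
      rw [Subgroup.mem_subgroupOf] at hn ⊢
      have hgK : (g : G) ∈ K := hTK g.2
      have h1 : (g : G) * (n : G) * (g : G)⁻¹ ∈ T :=
        (Subgroup.mem_normalizer_iff.mp (hKnT x hgK) (n : G)).mp hn.1
      have h2 : (g : G) * (n : G) * (g : G)⁻¹ ∈ S0 :=
        (Subgroup.mem_normalizer_iff.mp (hKn hgK) (n : G)).mp hn.2
      exact ⟨h1, h2⟩
    rcases hR.eq_bot_or_eq_top with hbot | htop
    · exfalso
      rw [Subgroup.subgroupOf_eq_bot] at hbot
      have : b ∈ (⊥ : Subgroup G) := by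
        have hle : T ⊓ S0 ≤ ⊥ := hbot le_rfl inf_le_left
        exact hle ⟨hbT, hbS0⟩
      exact hbne (Subgroup.mem_bot.mp this)
    · rw [Subgroup.subgroupOf_eq_top] at htop
      have hTS0 : T ≤ S0 := htop.trans inf_le_right
      have hcard : Nat.card S0 ≤ Nat.card T := le_of_eq (Nat.card_congr e.toEquiv)
      have hTeq : T = S0 := Subgroup.eq_of_le_of_card_ge hTS0 hcard
      rw [Subgroup.mem_normalizer_iff]
      intro y
      constructor
      · intro hy
        rw [← hTeq]
        exact ⟨y, hy, rfl⟩
      · intro hy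
        rw [← hTeq, mem_conj_map_iff'] at hy
        have : x⁻¹ * (x * y * x⁻¹) * x = y := by group
        rwa [this] at hy
  -- S0 is normal in G, hence S0 = K
  have hS0norm : S0.Normal := by
    rw [← Subgroup.normalizer_eq_top_iff]
    exact top_le_iff.mp (hfac ▸ sup_le hKn hC)
  have hS0nebot : S0 ≠ ⊥ := by
    intro h
    have : b = 1 := Subgroup.mem_bot.mp (h ▸ hbS0)
    exact hbne this
  have hS0K' : S0 = K := (hmin S0 hS0norm hS0K).resolve_left hS0nebot
  -- conclude t = 1
  by_contra hne
  have ht2 : 2 ≤ t := by omega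
  set i1 : Fin t := ⟨1, ht2⟩ with hi1
  have hne01 : i0 ≠ i1 := by
    intro h
    simpa [hi0, hi1, Fin.ext_iff] using h
  have hdisj := hindep i1
  have hle : S0 ≤ ⨆ (j : Fin t) (_ : j ≠ i1), S j :=
    le_iSup_of_le i0 (le_iSup_of_le hne01 le_rfl)
  have hSi1bot : S i1 = ⊥ := by
    have h1 : S i1 ≤ S0 := hS0K' ▸ hSiK i1
    exact le_bot_iff.mp (hdisj le_rfl (h1.trans hle))
  obtain ⟨g, hg⟩ := hconj i1
  -- get a nontrivial element of S i1
  have : (MulAut.conj g).toMonoidHom b ∈ S i1 := by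
    rw [hg]; exact ⟨b, hbS0, rfl⟩
  rw [hSi1bot, Subgroup.mem_bot] at this
  have : b = 1 := by
    have h1 : (MulAut.conj g) b = 1 := this
    have := (MulAut.conj g).injective (a₁ := b) (a₂ := 1) (by rw [h1, map_one])
    exact this
  exact hbne this
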